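/- Let $E$ be the elliptic curve over the rational function field $\mathbb{Q}(T)$ given by the Weierstrass equation $y^2 + (T^3 + T)xy = x^3 - (4T^5 - 17T^4 + 30T^3 - 18T^2 + 4)x^2 + T^2(2T-1)(3T^2 - 7T + 5)^2 x$. Then there exists $y_0 \in \mathbb{Q}(T)$ such that $(3T^2 - 7T + 5,\, y_0)$ is a point of $E(\mathbb{Q}(T))$ of infinite order. -/

import Mathlib

open WeierstrassCurve

noncomputable section

/-- The generic fibre of the properly elliptic surface birational over `ℚ` to `Z(11,1)`:
the elliptic curve over `ℚ(T)` with Weierstrass equation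
`y² + (T³+T)xy = x³ - (4T⁵ - 17T⁴ + 30T³ - 18T² + 4)x² + T²(2T-1)(3T² - 7T + 5)²x`. -/
def E111 : WeierstrassCurve (RatFunc ℚ) :=
  letI T : RatFunc ℚ := RatFunc.X
  { a₁ := T^3 + T
    a₂ := -(4*T^5 - 17*T^4 + 30*T^3 - 18*T^2 + 4)
    a₃ := 0
    a₄ := T^2*(2*T - 1)*(3*T^2 - 7*T + 5)^2
    a₆ := 0 }

namespace Z111aux

open Polynomial

/-! ### Generic lemmas about Weierstrass curves with `a₃ = a₆ = 0` -/

variable {F : Type*} [Field F] [DecidableEq F] {W : WeierstrassCurve.Affine F}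

lemma some_eq_some {x₁ y₁ x₂ y₂ : F} {h₁ : W.Nonsingular x₁ y₁} {h₂ : W.Nonsingular x₂ y₂}
    (hx : x₁ = x₂) (hy : y₁ = y₂) : Affine.Point.some _ _ h₁ = Affine.Point.some _ _ h₂ := by
  subst hx; subst hy; rfl

variable (h3 : W.a₃ = 0) (h6 : W.a₆ = 0)

include h3 h6 in
lemma y_eq_zero_of_x_eq_zero {y : F} (h : W.Equation 0 y) : y = 0 := by
  rw [Affine.equation_iff] at h
  have : y ^ 2 = 0 := by linear_combination h - y * h3 + h6
  exact pow_eq_zero_iff two_ne_zero |>.mp this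

include h3 h6 in
lemma addX_zero {x y : F} (h : W.Equation x y) (hx : x ≠ 0) :
    W.addX x 0 (W.slope x 0 y 0) = W.a₄ / x := by
  rw [Affine.equation_iff] at h
  rw [Affine.slope_of_X_ne hx, Affine.addX]
  field_simp
  linear_combination x * h - x * y * h3 + x * h6

include h3 h6 in
lemma addX_self {x y : F} (h : W.Equation x y) (hy : y ≠ W.negY x y) :
    W.addX x x (W.slope x x y y) = ((x ^ 2 - W.a₄) / (y - W.negY x y)) ^ 2 := by
  have hdval : y - W.negY x y = 2 * y + W.a₁ * x := by rw [Affine.negY, h3]; ring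
  obtain ⟨t, ht⟩ : ∃ t, t = 2 * y + W.a₁ * x := ⟨_, rfl⟩
  have hd : t ≠ 0 := by rw [ht, ← hdval]; exact sub_ne_zero.mpr hy
  rw [Affine.equation_iff] at h
  rw [Affine.slope_of_Y_ne rfl hy, Affine.addX, hdval, ← ht]
  field_simp
  linear_combination ((-(W.a₁^2 + 4*W.a₂ + 8*x))) * h
    + ((W.a₁^2 + 4*W.a₂ + 8*x)) * (y * h3 - h6)
    + ((W.a₁ * (3*x^2 + 2*W.a₂*x + W.a₄ - W.a₁*y)
        - (W.a₂ + 2*x) * (t + 2*y + W.a₁*x))) * ht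

include h3 h6 in
lemma two_torsion_sq {x y : F} (h : W.Equation x y) (hy : y = W.negY x y) (hx : x ≠ 0) :
    (8*x + 4*W.a₂ + W.a₁^2)^2 = (4*W.a₂ + W.a₁^2)^2 - 64*W.a₄ := by
  have hl : 2*y + W.a₁*x = 0 := by rw [Affine.negY] at hy; linear_combination hy - h3
  rw [Affine.equation_iff] at h
  apply mul_left_cancel₀ hx
  linear_combination (-64 : F)*h + 64*y*h3 - 64*h6 + (16*(2*y + W.a₁*x))*hl

include h3 h6 in
/-- If `Q + Q` is an affine point, then its `x`-coordinate is a square of a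
quotient `(x'^2 - a₄) / (y' - negY x' y')`. -/
lemma double_cases (Q : W.Point) {x y : F} (h : W.Nonsingular x y)
    (hQ : Q + Q = .some _ _ h) :
    ∃ x' y' : F, y' - W.negY x' y' ≠ 0 ∧ x = ((x'^2 - W.a₄) / (y' - W.negY x' y'))^2 := by
  rcases Q with _ | @⟨x', y', hQ'⟩
  · rw [← Affine.Point.zero_def, add_zero] at hQ
    exact absurd hQ.symm (Affine.Point.some_ne_zero h)
  · by_cases hy' : y' = W.negY x' y'
    · rw [Affine.Point.add_self_of_Y_eq hy'] at hQ
      exact absurd hQ.symm (Affine.Point.some_ne_zero h)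
    · rw [Affine.Point.add_self_of_Y_ne hy'] at hQ
      injection hQ with hx _
      exact ⟨x', y', sub_ne_zero.mpr hy', by rw [← hx, addX_self h3 h6 hQ'.1 hy']⟩

/-! ### Non-square polynomials over `ℚ` -/

lemma nsq1 (r : ℚ[X]) : r ^ 2 ≠ 3*X^2 - 7*X + 5 := by
  intro h
  have hld : (3*X^2 - 7*X + 5 : ℚ[X]).leadingCoeff = 3 := by
    unfold leadingCoeff
    have : (3*X^2 - 7*X + 5 : ℚ[X]).natDegree = 2 := by compute_degree!
    rw [this]
    norm_num [coeff_add, coeff_sub, coeff_X]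
  have h2 : (r.leadingCoeff) ^ 2 = 3 := by rw [← leadingCoeff_pow, h, hld]
  set a := r.leadingCoeff
  have h3 : ((a : ℝ)) ^ 2 = 3 := by exact_mod_cast congrArg (Rat.cast : ℚ → ℝ) h2
  have hirr : Irrational (Real.sqrt 3) := (Nat.prime_three).irrational_sqrt
  have : Real.sqrt 3 = |(a : ℝ)| := by rw [← h3, Real.sqrt_sq_eq_abs]
  rw [this] at hirr
  exact hirr ⟨|a|, by push_cast; rfl⟩

lemma nsq2 (r : ℚ[X]) : r ^ 2 ≠ 18*X^7 - 93*X^6 + 200*X^5 - 219*X^4 + 120*X^3 - 25*X^2 := by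
  intro h
  have hr0 : r ≠ 0 := by
    rintro rfl
    have := congrArg (eval 1) h
    simp at this
    norm_num at this
  have hdeg : (18*X^7 - 93*X^6 + 200*X^5 - 219*X^4 + 120*X^3 - 25*X^2 : ℚ[X]).natDegree = 7 := by
    compute_degree!
  have := congrArg natDegree h
  rw [natDegree_pow, hdeg] at this
  omega

lemma nsq3 (r : ℚ[X]) : r ^ 2 ≠
    54*X^9 - 405*X^8 + 1341*X^7 - 2522*X^6 + 2893*X^5 - 2010*X^4 + 775*X^3 - 125*X^2 := by
  intro h
  have hr0 : r ≠ 0 := by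
    rintro rfl
    have := congrArg (eval 1) h
    simp at this
    norm_num at this
  have hdeg : (54*X^9 - 405*X^8 + 1341*X^7 - 2522*X^6 + 2893*X^5 - 2010*X^4 + 775*X^3 - 125*X^2 :
      ℚ[X]).natDegree = 9 := by compute_degree!
  have := congrArg natDegree h
  rw [natDegree_pow, hdeg] at this
  omega

lemma nsq4 (r : ℚ[X]) : r ^ 2 ≠
    X^12 - 32*X^11 + 396*X^10 - 2480*X^9 + 8886*X^8 - 20288*X^7 + 30540*X^6 - 29808*X^5
      + 17105*X^4 - 3840*X^3 - 736*X^2 + 256 := by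
  intro h
  have := congrArg (eval 2) h
  rw [eval_pow] at this
  simp only [eval_add, eval_sub, eval_mul, eval_pow, eval_ofNat, eval_X, eval_one] at this
  norm_num at this
  nlinarith [sq_nonneg (r.eval 2), this]

/-- An element of `ℚ(T)` whose square is (the image of) a polynomial which is not the
square of any polynomial: contradiction. -/
lemma not_sq {c : ℚ[X]} (hc : ∀ r : ℚ[X], r ^ 2 ≠ c) (q : RatFunc ℚ) :
    q ^ 2 ≠ algebraMap ℚ[X] (RatFunc ℚ) c := by
  intro h
  have hint : IsIntegral ℚ[X] q := by
    refine ⟨X ^ 2 - C c, monic_X_pow_sub_C c two_ne_zero, ?_⟩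
    simp [h]
  obtain ⟨r, hr⟩ := IsIntegrallyClosed.isIntegral_iff.mp hint
  refine hc r (IsFractionRing.injective ℚ[X] (RatFunc ℚ) ?_)
  rw [map_pow, hr, h]

lemma phi_ne {c : ℚ[X]} (hc : c ≠ 0) : algebraMap ℚ[X] (RatFunc ℚ) c ≠ 0 := fun h =>
  hc (IsFractionRing.injective ℚ[X] (RatFunc ℚ) (by rw [h, map_zero]))

end Z111aux

namespace Z111aux

open Polynomial
open Classical

/-! ### Specific facts about `E111` -/

local notation "T" => RatFunc.X (K := ℚ)
local notation "φ" => algebraMap (Polynomial ℚ) (RatFunc ℚ)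

lemma ha1 : E111.toAffine.a₁ = T^3 + T := rfl
lemma ha2 : E111.toAffine.a₂ = -(4*T^5 - 17*T^4 + 30*T^3 - 18*T^2 + 4) := rfl
lemma ha3 : E111.toAffine.a₃ = 0 := rfl
lemma ha4 : E111.toAffine.a₄ = T^2*(2*T - 1)*(3*T^2 - 7*T + 5)^2 := rfl
lemma ha6 : E111.toAffine.a₆ = 0 := rfl

lemma C1 : (3*T^2 - 7*T + 5 : RatFunc ℚ) = φ (3*X^2 - 7*X + 5) := by
  simp only [map_add, map_sub, map_mul, map_pow, map_ofNat, RatFunc.algebraMap_X]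

lemma C2 : E111.toAffine.a₄ = φ (18*X^7 - 93*X^6 + 200*X^5 - 219*X^4 + 120*X^3 - 25*X^2) := by
  rw [ha4]
  simp only [map_add, map_sub, map_mul, map_pow, map_ofNat, RatFunc.algebraMap_X]
  ring

lemma C3 : (3*T^2 - 7*T + 5 : RatFunc ℚ) * E111.toAffine.a₄ =
    φ (54*X^9 - 405*X^8 + 1341*X^7 - 2522*X^6 + 2893*X^5 - 2010*X^4 + 775*X^3 - 125*X^2) := by
  rw [ha4]
  simp only [map_add, map_sub, map_mul, map_pow, map_ofNat, RatFunc.algebraMap_X]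
  ring

lemma C4 : (4*E111.toAffine.a₂ + E111.toAffine.a₁^2)^2 - 64*E111.toAffine.a₄ =
    φ (X^12 - 32*X^11 + 396*X^10 - 2480*X^9 + 8886*X^8 - 20288*X^7 + 30540*X^6 - 29808*X^5
      + 17105*X^4 - 3840*X^3 - 736*X^2 + 256) := by
  rw [ha4, ha2, ha1]
  simp only [map_add, map_sub, map_mul, map_pow, map_ofNat, map_one, RatFunc.algebraMap_X]
  ring

lemma hx0_ne : (3*T^2 - 7*T + 5 : RatFunc ℚ) ≠ 0 := by
  rw [C1]
  refine phi_ne fun h => ?_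
  have := congrArg (eval 0) h
  norm_num at this

lemma ha4_ne : E111.toAffine.a₄ ≠ 0 := by
  rw [C2]
  refine phi_ne fun h => ?_
  have := congrArg (eval 1) h
  norm_num at this

lemma h00 : E111.toAffine.Nonsingular 0 0 :=
  Affine.nonsingular_zero.mpr ⟨rfl, Or.inr ha4_ne⟩

lemma hP : E111.toAffine.Nonsingular (3*T^2 - 7*T + 5)
    (6*T^4 - 26*T^3 + 41*T^2 - 27*T + 5) := by
  rw [Affine.nonsingular_iff]
  constructor
  · rw [Affine.equation_iff, ha1, ha2, ha3, ha4, ha6]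
    ring
  · refine Or.inr fun h => ?_
    rw [ha3, ha1] at h
    have h2 : φ (3*X^5 + 5*X^4 - 44*X^3 + 75*X^2 - 49*X + 10) = 0 := by
      simp only [map_add, map_sub, map_mul, map_pow, map_ofNat, map_one, RatFunc.algebraMap_X]
      linear_combination h
    refine phi_ne (fun hc => ?_) h2
    have := congrArg (eval 0) hc
    norm_num at this

lemma main : addOrderOf (Affine.Point.some _ _ hP) = 0 := by
  by_contra h0
  set P : E111.toAffine.Point := Affine.Point.some _ _ hP with hPdef
  have hfin : IsOfFinAddOrder P := by
    by_contra hf; exact h0 (addOrderOf_eq_zero_iff.mpr hf)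
  set n := addOrderOf P with hn
  have hnpos : 0 < n := hfin.addOrderOf_pos
  have hnP : n • P = 0 := addOrderOf_nsmul_eq_zero P
  rcases Nat.even_or_odd n with he | ho
  · -- n even
    obtain ⟨m, hm⟩ := he
    have hm0 : 0 < m := by omega
    have hRR : m • P + m • P = 0 := by rw [← add_nsmul, ← hm]; exact hnP
    have hRne : m • P ≠ 0 := by
      intro h
      have := Nat.le_of_dvd hm0 (addOrderOf_dvd_of_nsmul_eq_zero h)
      omega
    rcases hR : m • P with _ | @⟨xR, yR, hRns⟩
    · exact hRne (hR.trans Affine.Point.zero_def)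
    rw [hR] at hRR
    by_cases hyR : yR = E111.toAffine.negY xR yR
    case neg =>
      rw [Affine.Point.add_self_of_Y_ne hyR] at hRR
      exact Affine.Point.some_ne_zero _ hRR
    · -- the half point is 2-torsion, hence is (0,0)
      have hxR : xR = 0 := by
        by_contra hxRne
        exact not_sq nsq4 _ ((two_torsion_sq ha3 ha6 hRns.1 hyR hxRne).trans C4)
      have hyR0 : yR = 0 := y_eq_zero_of_x_eq_zero ha3 ha6 (hxR ▸ hRns.1)
      subst hxR; subst hyR0
      rcases Nat.even_or_odd m with hme | hmo
      · -- n divisible by 4 : a₄ would be a square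
        obtain ⟨k, hk⟩ := hme
        have hSS : k • P + k • P = Affine.Point.some _ _ hRns := by
          rw [← add_nsmul, ← hk]; exact hR
        obtain ⟨x', y', hd, hx0⟩ := double_cases ha3 ha6 (k • P) hRns hSS
        have hnum : x'^2 - E111.toAffine.a₄ = 0 := by
          rcases div_eq_zero_iff.mp (pow_eq_zero_iff two_ne_zero |>.mp hx0.symm) with h | h
          · exact h
          · exact absurd h hd
        refine not_sq nsq2 x' ?_
        rw [← C2]; linear_combination hnum
      · -- n ≡ 2 mod 4 : x₀ · a₄ would be a square
        obtain ⟨j, hj⟩ := hmo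
        have hkey : ((j+1) • P + (j+1) • P) + m • P = P := by
          rw [← add_nsmul, ← add_nsmul]
          have h' : (j+1) + (j+1) + m = n + 1 := by omega
          rw [h', succ_nsmul, hnP, zero_add]
        rw [hR] at hkey
        rcases hQ : (j+1) • P with _ | @⟨u, v, hu⟩
        · rw [hQ, ← Affine.Point.zero_def, zero_add, zero_add, hPdef] at hkey
          injection hkey with h1 h2
          exact hx0_ne h1.symm
        rw [hQ] at hkey
        by_cases hyu : v = E111.toAffine.negY u v
        · rw [Affine.Point.add_self_of_Y_eq hyu, zero_add, hPdef] at hkey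
          injection hkey with h1 h2
          exact hx0_ne h1.symm
        rw [Affine.Point.add_self_of_Y_ne hyu] at hkey
        have hdd := addX_self ha3 ha6 hu.1 hyu
        set u2 := E111.toAffine.addX u u (E111.toAffine.slope u u v v) with hu2def
        set v2 := E111.toAffine.addY u u v (E111.toAffine.slope u u v v) with hv2def
        have hns2 : E111.toAffine.Nonsingular u2 v2 :=
          Affine.nonsingular_add hu hu (fun hxy => hyu hxy.right)
        have hu2ne : u2 ≠ 0 := by
          intro h0'
          have hv20 : v2 = 0 := by
            apply y_eq_zero_of_x_eq_zero ha3 ha6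
            rw [← h0']; exact hns2.1
          have heqpt : Affine.Point.some _ _ (Affine.nonsingular_add hu hu (fun hxy => hyu hxy.right))
              = Affine.Point.some _ _ hRns := some_eq_some h0' hv20
          rw [heqpt, hRR, hPdef] at hkey
          exact Affine.Point.some_ne_zero hP hkey.symm
        rw [Affine.Point.add_of_X_ne hu2ne, hPdef] at hkey
        injection hkey with h1 h2
        have htr := addX_zero ha3 ha6 hns2.1 hu2ne
        have hxa : E111.toAffine.a₄ = (3*T^2 - 7*T + 5) * u2 :=
          (div_eq_iff hu2ne).mp (h1.symm.trans htr).symm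
        refine not_sq nsq3 ((3*T^2 - 7*T + 5) *
          ((u^2 - E111.toAffine.a₄) / (v - E111.toAffine.negY u v))) ?_
        rw [mul_pow, ← hdd, ← C3, hxa]
        ring
  · -- n odd : x₀ would be a square
    obtain ⟨j, hj⟩ := ho
    have hQQ : (j+1) • P + (j+1) • P = P := by
      rw [← add_nsmul]
      have h' : (j+1) + (j+1) = n + 1 := by omega
      rw [h', succ_nsmul, hnP, zero_add]
    rw [hPdef] at hQQ
    obtain ⟨x', y', hd, hx0⟩ := double_cases ha3 ha6 _ hP hQQ
    exact not_sq nsq1 _ (hx0.symm.trans C1)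

end Z111aux

open Classical in
/-- There exists `y₀ ∈ ℚ(T)` such that `(3T² - 7T + 5, y₀)` is a point of `E(ℚ(T))` of
infinite order. -/
theorem Z111_point_of_infinite_order :
    letI T : RatFunc ℚ := RatFunc.X
    ∃ (y₀ : RatFunc ℚ) (h : E111.toAffine.Nonsingular (3*T^2 - 7*T + 5) y₀),
      addOrderOf (WeierstrassCurve.Affine.Point.some _ _ h) = 0 := by
  exact ⟨_, Z111aux.hP, Z111aux.main⟩
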